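/- Consider the scalar linear Volterra-type equation V(t) = F(t) + ∫₀ᵗ V(s⁻) dK(s) on [0, τ], where F is a càdlàg function of bounded variation with F(0) = 0 and K is a right-continuous nondecreasing step function with finitely many jumps, none equal to −1. Then the unique solution is V(t) = ∫₀ᵗ 𝓕(s, t) dF(s), where 𝓕(s, t) = ∏_{u ∈ (s, t]} (1 + ΔK(u)) is the product over jump times of K in (s, t]. -/

import Mathlib

open MeasureTheory Set Function
open scoped Classical

lemma volterraAux_tele (A : Finset ℝ) (g : ℝ → ℝ) :
    ∏ u ∈ A, (1 + g u) = 1 + ∑ u ∈ A, (∏ w ∈ A.filter (fun w => w < u), (1 + g w)) * g u := by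
  induction A using Finset.induction_on_max with
  | empty => simp
  | insert a A ha ih =>
    have haA : a ∉ A := fun h => lt_irrefl a (ha a h)
    rw [Finset.prod_insert haA, Finset.sum_insert haA]
    have h1 : (insert a A).filter (fun w => w < a) = A := by
      rw [Finset.filter_insert]
      simp only [lt_irrefl, if_false]
      exact Finset.filter_true_of_mem (fun x hx => ha x hx)
    have h2 : ∀ u ∈ A, (insert a A).filter (fun w => w < u) = A.filter (fun w => w < u) := by
      intro u hu
      rw [Finset.filter_insert]
      have : ¬ a < u := not_lt.2 (ha u hu).le
      simp [this]
    rw [h1, Finset.sum_congr rfl (fun u hu => by rw [h2 u hu]), ih]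
    ring

lemma volterraAux_meas (S : Finset ℝ) (j : ℝ → ℝ) (p : ℝ → Prop) :
    Measurable (fun s => ∏ u ∈ S.filter (fun u => s < u ∧ p u), (1 + j u)) := by
  have h : (fun s => ∏ u ∈ S.filter (fun u => s < u ∧ p u), (1 + j u))
      = fun s => ∏ u ∈ S, (if s < u ∧ p u then 1 + j u else 1) :=
    funext fun s => Finset.prod_filter _ _
  rw [h]
  apply Finset.measurable_prod
  intro u _
  by_cases hp : p u
  · simp only [hp, and_true]
    exact Measurable.ite measurableSet_Iio measurable_const measurable_const
  · simp [hp]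

lemma volterraAux_bound (S : Finset ℝ) (j : ℝ → ℝ) (hj0 : ∀ u ∈ S, 0 ≤ j u)
    (p : ℝ → Prop) (s : ℝ) :
    |∏ u ∈ S.filter (fun u => s < u ∧ p u), (1 + j u)| ≤ ∏ u ∈ S, (1 + j u) := by
  rw [abs_of_nonneg (Finset.prod_nonneg fun u hu => by
    have := hj0 u (Finset.mem_filter.1 hu).1; linarith), Finset.prod_filter]
  refine Finset.prod_le_prod (fun u hu => ?_) (fun u hu => ?_) <;>
    have := hj0 u hu <;> split <;> linarith

lemma volterraAux_M_nonneg (S : Finset ℝ) (j : ℝ → ℝ) (hj0 : ∀ u ∈ S, 0 ≤ j u) :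
    (0:ℝ) ≤ ∏ u ∈ S, (1 + j u) :=
  Finset.prod_nonneg fun u hu => by have := hj0 u hu; linarith

lemma volterraAux_integrable (G : StieltjesFunction ℝ) {A : Set ℝ} (hA : G.measure A ≠ ⊤)
    {f : ℝ → ℝ} (hf : Measurable f) {C : ℝ} (hC : ∀ s, |f s| ≤ C) :
    Integrable f (G.measure.restrict A) := by
  haveI : IsFiniteMeasure (G.measure.restrict A) :=
    ⟨by rwa [Measure.restrict_apply_univ, lt_top_iff_ne_top]⟩
  exact (integrable_const C).mono' hf.aestronglyMeasurable
    (ae_of_all _ fun s => by rw [Real.norm_eq_abs]; exact hC s)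

lemma volterraAux_intIoc (S : Finset ℝ) (j : ℝ → ℝ) (hj0 : ∀ u ∈ S, 0 ≤ j u)
    (G : StieltjesFunction ℝ) (b : ℝ) (hb : 0 ≤ b) :
    ∫ s in Ioc (0:ℝ) b, (∏ u ∈ S.filter (fun u => s < u ∧ u ≤ b), (1 + j u)) ∂G.measure
      = (G b - G 0) + ∑ u ∈ S.filter (fun u => 0 < u ∧ u ≤ b),
          (∫ s in Ioo (0:ℝ) u,
            (∏ w ∈ S.filter (fun w => s < w ∧ w < u), (1 + j w)) ∂G.measure) * j u := by
  have hfin : G.measure (Ioc (0:ℝ) b) ≠ ⊤ := by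
    rw [G.measure_Ioc]; exact ENNReal.ofReal_ne_top
  haveI : IsFiniteMeasure (G.measure.restrict (Ioc (0:ℝ) b)) :=
    ⟨by rwa [Measure.restrict_apply_univ, lt_top_iff_ne_top]⟩
  have e1 : ∫ s in Ioc (0:ℝ) b, (∏ u ∈ S.filter (fun u => s < u ∧ u ≤ b), (1 + j u)) ∂G.measure
      = ∫ s in Ioc (0:ℝ) b, (1 + ∑ u ∈ S.filter (fun u => 0 < u ∧ u ≤ b),
          (Iio u).indicator
            (fun s' => (∏ w ∈ S.filter (fun w => s' < w ∧ w < u), (1 + j w)) * j u) s)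
          ∂G.measure := by
    refine setIntegral_congr_fun measurableSet_Ioc fun s hs => ?_
    rw [volterraAux_tele]
    congr 1
    have hAB : S.filter (fun u => s < u ∧ u ≤ b)
        = (S.filter (fun u => 0 < u ∧ u ≤ b)).filter (fun u => s < u) := by
      ext v
      simp only [Finset.mem_filter]
      constructor
      · rintro ⟨h1, h2, h3⟩; exact ⟨⟨h1, hs.1.trans h2, h3⟩, h2⟩
      · rintro ⟨⟨h1, _, h3⟩, h2⟩; exact ⟨h1, h2, h3⟩
    rw [hAB, Finset.sum_filter]
    refine Finset.sum_congr rfl fun u hu => ?_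
    simp only [Finset.mem_filter] at hu
    rw [Set.indicator_apply]
    by_cases hsu : s < u
    · rw [if_pos hsu, if_pos (mem_Iio.2 hsu)]
      congr 1
      refine Finset.prod_congr ?_ (fun _ _ => rfl)
      ext w
      simp only [Finset.mem_filter]
      constructor
      · rintro ⟨⟨⟨hw, _, _⟩, hsw⟩, hwu⟩; exact ⟨hw, hsw, hwu⟩
      · rintro ⟨hw, hsw, hwu⟩
        exact ⟨⟨⟨hw, hs.1.trans hsw, hwu.le.trans hu.2.2⟩, hsw⟩, hwu⟩
    · rw [if_neg hsu, if_neg (fun h => hsu (mem_Iio.1 h))]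
  have hint : ∀ u ∈ S.filter (fun u => 0 < u ∧ u ≤ b),
      Integrable (fun s => (Iio u).indicator
        (fun s' => (∏ w ∈ S.filter (fun w => s' < w ∧ w < u), (1 + j w)) * j u) s)
        (G.measure.restrict (Ioc (0:ℝ) b)) := by
    intro u _
    refine volterraAux_integrable G hfin
      (((volterraAux_meas S j (fun w => w < u)).mul_const (j u)).indicator measurableSet_Iio)
      (C := (∏ v ∈ S, (1 + j v)) * |j u|) fun s => ?_
    rw [Set.indicator_apply]
    split
    · rw [abs_mul]
      exact mul_le_mul_of_nonneg_right (volterraAux_bound S j hj0 _ s) (abs_nonneg _)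
    · simpa using mul_nonneg (volterraAux_M_nonneg S j hj0) (abs_nonneg (j u))
  rw [e1, integral_add (integrable_const 1) (integrable_finset_sum _ hint),
    integral_finset_sum _ hint, integral_const, measureReal_def, Measure.restrict_apply_univ, G.measure_Ioc,
    smul_eq_mul, mul_one, ENNReal.toReal_ofReal (sub_nonneg.2 (G.mono hb))]
  congr 1
  refine Finset.sum_congr rfl fun u hu => ?_
  simp only [Finset.mem_filter] at hu
  rw [setIntegral_indicator measurableSet_Iio]
  have hset : Ioc (0:ℝ) b ∩ Iio u = Ioo (0:ℝ) u := by
    ext x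
    simp only [mem_inter_iff, mem_Ioc, mem_Iio, mem_Ioo]
    constructor
    · rintro ⟨⟨h1, _⟩, h3⟩; exact ⟨h1, h3⟩
    · rintro ⟨h1, h3⟩; exact ⟨⟨h1, h3.le.trans hu.2.2⟩, h3⟩
  rw [hset, integral_mul_const]

lemma volterraAux_intIoo (S : Finset ℝ) (j : ℝ → ℝ) (hj0 : ∀ u ∈ S, 0 ≤ j u)
    (G : StieltjesFunction ℝ) (b : ℝ) (hb : 0 < b) :
    ∫ s in Ioo (0:ℝ) b, (∏ u ∈ S.filter (fun u => s < u ∧ u < b), (1 + j u)) ∂G.measure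
      = (leftLim G b - G 0) + ∑ u ∈ S.filter (fun u => 0 < u ∧ u < b),
          (∫ s in Ioo (0:ℝ) u,
            (∏ w ∈ S.filter (fun w => s < w ∧ w < u), (1 + j w)) ∂G.measure) * j u := by
  have hfin : G.measure (Ioo (0:ℝ) b) ≠ ⊤ := by
    rw [G.measure_Ioo]; exact ENNReal.ofReal_ne_top
  haveI : IsFiniteMeasure (G.measure.restrict (Ioo (0:ℝ) b)) :=
    ⟨by rwa [Measure.restrict_apply_univ, lt_top_iff_ne_top]⟩
  have e1 : ∫ s in Ioo (0:ℝ) b, (∏ u ∈ S.filter (fun u => s < u ∧ u < b), (1 + j u)) ∂G.measure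
      = ∫ s in Ioo (0:ℝ) b, (1 + ∑ u ∈ S.filter (fun u => 0 < u ∧ u < b),
          (Iio u).indicator
            (fun s' => (∏ w ∈ S.filter (fun w => s' < w ∧ w < u), (1 + j w)) * j u) s)
          ∂G.measure := by
    refine setIntegral_congr_fun measurableSet_Ioo fun s hs => ?_
    rw [volterraAux_tele]
    congr 1
    have hAB : S.filter (fun u => s < u ∧ u < b)
        = (S.filter (fun u => 0 < u ∧ u < b)).filter (fun u => s < u) := by
      ext v
      simp only [Finset.mem_filter]
      constructor
      · rintro ⟨h1, h2, h3⟩; exact ⟨⟨h1, hs.1.trans h2, h3⟩, h2⟩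
      · rintro ⟨⟨h1, _, h3⟩, h2⟩; exact ⟨h1, h2, h3⟩
    rw [hAB, Finset.sum_filter]
    refine Finset.sum_congr rfl fun u hu => ?_
    simp only [Finset.mem_filter] at hu
    rw [Set.indicator_apply]
    by_cases hsu : s < u
    · rw [if_pos hsu, if_pos (mem_Iio.2 hsu)]
      congr 1
      refine Finset.prod_congr ?_ (fun _ _ => rfl)
      ext w
      simp only [Finset.mem_filter]
      constructor
      · rintro ⟨⟨⟨hw, _, _⟩, hsw⟩, hwu⟩; exact ⟨hw, hsw, hwu⟩
      · rintro ⟨hw, hsw, hwu⟩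
        exact ⟨⟨⟨hw, hs.1.trans hsw, hwu.trans hu.2.2⟩, hsw⟩, hwu⟩
    · rw [if_neg hsu, if_neg (fun h => hsu (mem_Iio.1 h))]
  have hint : ∀ u ∈ S.filter (fun u => 0 < u ∧ u < b),
      Integrable (fun s => (Iio u).indicator
        (fun s' => (∏ w ∈ S.filter (fun w => s' < w ∧ w < u), (1 + j w)) * j u) s)
        (G.measure.restrict (Ioo (0:ℝ) b)) := by
    intro u _
    refine volterraAux_integrable G hfin
      (((volterraAux_meas S j (fun w => w < u)).mul_const (j u)).indicator measurableSet_Iio)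
      (C := (∏ v ∈ S, (1 + j v)) * |j u|) fun s => ?_
    rw [Set.indicator_apply]
    split
    · rw [abs_mul]
      exact mul_le_mul_of_nonneg_right (volterraAux_bound S j hj0 _ s) (abs_nonneg _)
    · simpa using mul_nonneg (volterraAux_M_nonneg S j hj0) (abs_nonneg (j u))
  rw [e1, integral_add (integrable_const 1) (integrable_finset_sum _ hint),
    integral_finset_sum _ hint, integral_const, measureReal_def, Measure.restrict_apply_univ, G.measure_Ioo,
    smul_eq_mul, mul_one, ENNReal.toReal_ofReal (sub_nonneg.2 (G.mono.le_leftLim hb))]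
  congr 1
  refine Finset.sum_congr rfl fun u hu => ?_
  simp only [Finset.mem_filter] at hu
  rw [setIntegral_indicator measurableSet_Iio]
  have hset : Ioo (0:ℝ) b ∩ Iio u = Ioo (0:ℝ) u := by
    ext x
    simp only [mem_inter_iff, mem_Ioo, mem_Iio]
    constructor
    · rintro ⟨⟨h1, _⟩, h3⟩; exact ⟨h1, h3⟩
    · rintro ⟨h1, h3⟩; exact ⟨⟨h1, h3.trans hu.2.2⟩, h3⟩
  rw [hset, integral_mul_const]

/-- Explicit product-integral solution of a linear Volterra equation driven by a
pure-jump nondecreasing step function `K` (jumps `j u ≥ 0`, none equal to `−1`,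
at the finitely many times `u ∈ S`) with càdlàg bounded-variation forcing term
`F = F₁ − F₂`, `F(0) = 0`: any solution of
`V(t) = F(t) + ∫₀ᵗ V(s⁻) dK(s)` on `[0, τ]` satisfies
`V(t) = ∫₀ᵗ ∏_{u ∈ (s,t]} (1 + ΔK(u)) dF(s)`. -/
theorem volterra_product_integral_solution
    (τ : ℝ) (hτ : 0 < τ)
    (S : Finset ℝ) (j : ℝ → ℝ)
    (hj0 : ∀ u ∈ S, 0 ≤ j u) (hjne : ∀ u ∈ S, j u ≠ -1)
    (K : ℝ → ℝ) (hK : ∀ t, K t = ∑ u ∈ S, if u ≤ t then j u else 0)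
    (F₁ F₂ : StieltjesFunction ℝ) (hF0 : F₁ 0 - F₂ 0 = 0)
    (V : ℝ → ℝ)
    (hV : ∀ t ∈ Set.Icc (0:ℝ) τ,
      V t = (F₁ t - F₂ t)
        + ∑ u ∈ S.filter (fun u => 0 < u ∧ u ≤ t), Function.leftLim V u * j u) :
    ∀ t ∈ Set.Icc (0:ℝ) τ,
      V t = (∫ s in Set.Ioc (0:ℝ) t,
              (∏ u ∈ S.filter (fun u => s < u ∧ u ≤ t), (1 + j u)) ∂F₁.measure)
            - ∫ s in Set.Ioc (0:ℝ) t,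
              (∏ u ∈ S.filter (fun u => s < u ∧ u ≤ t), (1 + j u)) ∂F₂.measure := by
  have hL : ∀ u : ℝ, 0 < u → u ≤ τ →
      leftLim V u = (leftLim F₁ u - leftLim F₂ u)
        + ∑ v ∈ S.filter (fun v => 0 < v ∧ v < u), leftLim V v * j v := by
    intro u hu0 huτ
    set T := S.filter (fun v => 0 < v ∧ v < u) with hT
    set C := ∑ v ∈ T, leftLim V v * j v with hC
    have hne : (insert (0:ℝ) T).Nonempty := Finset.insert_nonempty _ _
    set c := (insert (0:ℝ) T).max' hne with hcdef
    have hc0 : (0:ℝ) ≤ c := Finset.le_max' _ _ (Finset.mem_insert_self _ _)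
    have hcu : c < u := by
      rw [hcdef, Finset.max'_lt_iff]
      intro y hy
      rcases Finset.mem_insert.1 hy with rfl | hy
      · exact hu0
      · exact (Finset.mem_filter.1 hy).2.2
    have hVt : ∀ x ∈ Ioo c u, V x = (F₁ x - F₂ x) + C := by
      intro x hx
      rw [hV x ⟨hc0.trans hx.1.le, hx.2.le.trans huτ⟩]
      congr 1
      have he : S.filter (fun v => 0 < v ∧ v ≤ x) = T := by
        ext v
        rw [hT]
        simp only [Finset.mem_filter]
        constructor
        · rintro ⟨h1, h2, h3⟩; exact ⟨h1, h2, h3.trans_lt hx.2⟩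
        · rintro ⟨h1, h2, h3⟩
          refine ⟨h1, h2, ?_⟩
          have hvc : v ≤ c := Finset.le_max' _ _
            (Finset.mem_insert_of_mem (by rw [hT] at *; exact Finset.mem_filter.2 ⟨h1, h2, h3⟩))
          exact hvc.trans hx.1.le
      rw [he]
    have htd : Filter.Tendsto (fun x => (F₁ x - F₂ x) + C) (nhdsWithin u (Iio u))
        (nhds ((leftLim F₁ u - leftLim F₂ u) + C)) :=
      ((F₁.mono.tendsto_leftLim u).sub (F₂.mono.tendsto_leftLim u)).add tendsto_const_nhds
    have htd2 : Filter.Tendsto V (nhdsWithin u (Iio u))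
        (nhds ((leftLim F₁ u - leftLim F₂ u) + C)) := by
      refine Filter.Tendsto.congr' ?_ htd
      filter_upwards [Ioo_mem_nhdsLT_of_mem (⟨hcu, le_refl u⟩ : u ∈ Ioc c u)] with x hx
      exact (hVt x hx).symm
    exact leftLim_eq_of_tendsto htd2
  have key : ∀ n : ℕ, ∀ u ∈ S, 0 < u → u ≤ τ →
      (S.filter (fun v => 0 < v ∧ v < u)).card < n →
      leftLim V u
        = (∫ s in Ioo (0:ℝ) u,
            (∏ w ∈ S.filter (fun w => s < w ∧ w < u), (1 + j w)) ∂F₁.measure)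
          - ∫ s in Ioo (0:ℝ) u,
            (∏ w ∈ S.filter (fun w => s < w ∧ w < u), (1 + j w)) ∂F₂.measure := by
    intro n
    induction n with
    | zero => intro u _ _ _ h; omega
    | succ n ih =>
      intro u huS hu0 huτ hcard
      rw [hL u hu0 huτ, volterraAux_intIoo S j hj0 F₁ u hu0, volterraAux_intIoo S j hj0 F₂ u hu0]
      have hsum : ∑ v ∈ S.filter (fun v => 0 < v ∧ v < u), leftLim V v * j v
          = ∑ v ∈ S.filter (fun v => 0 < v ∧ v < u),
              ((∫ s in Ioo (0:ℝ) v,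
                  (∏ w ∈ S.filter (fun w => s < w ∧ w < v), (1 + j w)) ∂F₁.measure)
               - ∫ s in Ioo (0:ℝ) v,
                  (∏ w ∈ S.filter (fun w => s < w ∧ w < v), (1 + j w)) ∂F₂.measure) * j v := by
        refine Finset.sum_congr rfl fun v hv => ?_
        simp only [Finset.mem_filter] at hv
        have hsub1 : S.filter (fun w => 0 < w ∧ w < v) ⊆ S.filter (fun w => 0 < w ∧ w < u) := by
          intro w hw
          simp only [Finset.mem_filter] at hw ⊢
          exact ⟨hw.1, hw.2.1, hw.2.2.trans hv.2.2⟩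
        have hvmem : v ∈ S.filter (fun w => 0 < w ∧ w < u) := Finset.mem_filter.2 ⟨hv.1, hv.2⟩
        have hvnot : v ∉ S.filter (fun w => 0 < w ∧ w < v) := by
          simp [Finset.mem_filter]
        have hlt : (S.filter (fun w => 0 < w ∧ w < v)).card
            < (S.filter (fun w => 0 < w ∧ w < u)).card :=
          Finset.card_lt_card ((Finset.ssubset_iff_of_subset hsub1).2 ⟨v, hvmem, hvnot⟩)
        rw [ih v hv.1 hv.2.1 (hv.2.2.le.trans huτ) (by omega)]
      rw [hsum]
      simp only [sub_mul]
      rw [Finset.sum_sub_distrib]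
      linarith [hF0]
  intro t ht
  rw [hV t ht, volterraAux_intIoc S j hj0 F₁ t ht.1, volterraAux_intIoc S j hj0 F₂ t ht.1]
  have hsum : ∑ u ∈ S.filter (fun u => 0 < u ∧ u ≤ t), leftLim V u * j u
      = ∑ u ∈ S.filter (fun u => 0 < u ∧ u ≤ t),
          ((∫ s in Ioo (0:ℝ) u,
              (∏ w ∈ S.filter (fun w => s < w ∧ w < u), (1 + j w)) ∂F₁.measure)
           - ∫ s in Ioo (0:ℝ) u,
              (∏ w ∈ S.filter (fun w => s < w ∧ w < u), (1 + j w)) ∂F₂.measure) * j u := by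
    refine Finset.sum_congr rfl fun u hu => ?_
    simp only [Finset.mem_filter] at hu
    rw [key ((S.filter (fun v => 0 < v ∧ v < u)).card + 1) u hu.1 hu.2.1 (hu.2.2.trans ht.2)
      (Nat.lt_succ_self _)]
  rw [hsum]
  simp only [sub_mul]
  rw [Finset.sum_sub_distrib]
  linarith [hF0]
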